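/- arXiv:2103.16185 — 4 statements merged into one kernel-verified Lean document; each statement's English description precedes it below -/
import Mathlib

section
/- Let A = (Q, Σ, δ) be a deterministic finite automaton and p, q ∈ Q. If there exists a word u with δ(p, u) = δ(q, u), then there exists such a word of length at most C(|Q|, 2) = |Q|(|Q|-1)/2. -/
/-- Transition function extended to words. -/
def deltaStar {Q A : Type*} (δ : Q → A → Q) (q : Q) (w : List A) : Q :=
  w.foldl δ q

/-- Additive weight of a word. -/
def wordWeight {A : Type*} (γ : A → ℕ) (w : List A) : ℕ :=
  (w.map γ).sum

/-- Image of a set of states under a word. -/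
def setImage {Q A : Type*} [DecidableEq Q] (δ : Q → A → Q) (P : Finset Q) (w : List A) : Finset Q :=
  P.image (fun q => deltaStar δ q w)

theorem pair_merge_short {Q A : Type*} [Fintype Q] (δ : Q → A → Q) (p q : Q)
    (h : ∃ u : List A, deltaStar δ p u = deltaStar δ q u) :
    ∃ u : List A, deltaStar δ p u = deltaStar δ q u ∧
      u.length ≤ (Fintype.card Q).choose 2 := by
  classical
  obtain ⟨u0, hu0⟩ := h
  have hP : ∃ k, ∃ u : List A, u.length = k ∧ deltaStar δ p u = deltaStar δ q u :=
    ⟨u0.length, u0, rfl, hu0⟩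
  obtain ⟨u, hlen, hmerge⟩ := Nat.find_spec hP
  set k := Nat.find hP with hk
  have hmin : ∀ m, m < k → ¬ ∃ v : List A, v.length = m ∧ deltaStar δ p v = deltaStar δ q v :=
    fun m hm => Nat.find_min hP hm
  refine ⟨u, hmerge, ?_⟩
  rw [hlen]
  set a : ℕ → Q := fun i => deltaStar δ p (u.take i) with ha
  set b : ℕ → Q := fun i => deltaStar δ q (u.take i) with hb
  have hconcat : ∀ (r : Q) (v w : List A),
      deltaStar δ r (v ++ w) = deltaStar δ (deltaStar δ r v) w := by
    intro r v w; simp [deltaStar, List.foldl_append]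
  have hsplit : ∀ (r : Q) (i : ℕ),
      deltaStar δ r u = deltaStar δ (deltaStar δ r (u.take i)) (u.drop i) := by
    intro r i
    conv_lhs => rw [← List.take_append_drop i u]
    exact hconcat r _ _
  have hdiag : ∀ i, i < k → a i ≠ b i := by
    intro i hi hab
    refine hmin i hi ⟨u.take i, ?_, hab⟩
    rw [List.length_take, hlen, min_eq_left hi.le]
  have hcross : ∀ i j, i < j → j ≤ k →
      ¬ ((a i = a j ∧ b i = b j) ∨ (a i = b j ∧ b i = a j)) := by
    intro i j hij hjk hcase
    set w := u.take i ++ u.drop j with hw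
    have hwl : w.length = i + (k - j) := by
      rw [hw, List.length_append, List.length_take, List.length_drop, hlen,
        min_eq_left (le_trans hij.le hjk)]
    have hwlt : w.length < k := by omega
    have hpw : deltaStar δ p w = deltaStar δ (a i) (u.drop j) := hconcat p _ _
    have hqw : deltaStar δ q w = deltaStar δ (b i) (u.drop j) := hconcat q _ _
    have hpj : deltaStar δ (a j) (u.drop j) = deltaStar δ p u := (hsplit p j).symm
    have hqj : deltaStar δ (b j) (u.drop j) = deltaStar δ q u := (hsplit q j).symm
    refine hmin w.length hwlt ⟨w, rfl, ?_⟩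
    rcases hcase with ⟨h1, h2⟩ | ⟨h1, h2⟩
    · rw [hpw, hqw, h1, h2, hpj, hqj, hmerge]
    · rw [hpw, hqw, h1, h2, hpj, hqj, hmerge]
  have hF : ∀ i : Fin k, ¬ (s(a i, b i)).IsDiag := by
    intro i hd
    exact hdiag i i.isLt (Sym2.mk_isDiag_iff.mp hd)
  let F : Fin k → {s : Sym2 Q // ¬ s.IsDiag} := fun i => ⟨s(a i, b i), hF i⟩
  have hFinj : Function.Injective F := by
    intro i j hij
    by_contra hne
    have hsym : (a i = a j ∧ b i = b j) ∨ (a i = b j ∧ b i = a j) := by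
      have := congrArg Subtype.val hij
      simpa [F, Sym2.mk_eq_mk_iff, Prod.ext_iff, Prod.swap] using this
    rcases lt_or_gt_of_ne (fun hh : (i:ℕ) = (j:ℕ) => hne (Fin.ext hh)) with hlt | hgt
    · exact hcross i j hlt j.isLt.le hsym
    · refine hcross j i hgt i.isLt.le ?_
      tauto
  calc k = Fintype.card (Fin k) := (Fintype.card_fin k).symm
    _ ≤ Fintype.card {s : Sym2 Q // ¬ s.IsDiag} := Fintype.card_le_of_injective F hFinj
    _ = (Fintype.card Q).choose 2 := Sym2.card_subtype_not_diag
end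

section
/- Let A = (Q, Σ, δ, γ) be a synchronizing WFA with γ(a) ≤ k for all a ∈ Σ, and let P ⊆ Q be a nonempty subset of states. Then there exists a word w with |δ(P, w)| = 1 (where δ(P, w) = {δ(p, w) : p ∈ P}) and γ(w) ≤ (|P| - 1) · k · C(|Q|, 2). -/
lemma deltaStar_append {Q A : Type*} (δ : Q → A → Q) (q : Q) (u v : List A) :
    deltaStar δ q (u ++ v) = deltaStar δ (deltaStar δ q u) v := by
  simp [deltaStar, List.foldl_append]

lemma wordWeight_append {A : Type*} (γ : A → ℕ) (u v : List A) :
    wordWeight γ (u ++ v) = wordWeight γ u + wordWeight γ v := by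
  simp [wordWeight]

lemma wordWeight_le {A : Type*} (γ : A → ℕ) (k : ℕ) (hk : ∀ a : A, γ a ≤ k) (w : List A) :
    wordWeight γ w ≤ k * w.length := by
  induction w with
  | nil => simp [wordWeight]
  | cons a t ih =>
    simp only [wordWeight, List.map_cons, List.sum_cons, List.length_cons] at *
    calc γ a + (t.map γ).sum ≤ k + k * t.length := add_le_add (hk a) ih
      _ = k * (t.length + 1) := by ring

lemma setImage_append {Q A : Type*} [DecidableEq Q] (δ : Q → A → Q) (P : Finset Q)
    (u v : List A) : setImage δ P (u ++ v) = setImage δ (setImage δ P u) v := by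
  simp [setImage, deltaStar_append, Finset.image_image, Function.comp_def]

lemma pair_merge {Q A : Type*} [Fintype Q] [DecidableEq Q]
    (δ : Q → A → Q)
    (hsync : ∃ (w : List A) (qbar : Q), ∀ p : Q, deltaStar δ p w = qbar)
    (p q : Q) :
    ∃ w : List A, deltaStar δ p w = deltaStar δ q w ∧
      w.length ≤ (Fintype.card Q).choose 2 := by
  classical
  obtain ⟨w0, qbar, hw0⟩ := hsync
  have hex : ∃ n : ℕ, ∃ w : List A, w.length = n ∧ deltaStar δ p w = deltaStar δ q w :=
    ⟨w0.length, w0, rfl, by rw [hw0 p, hw0 q]⟩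
  set n := Nat.find hex with hndef
  obtain ⟨w, hwlen, hwmerge⟩ := Nat.find_spec hex
  refine ⟨w, hwmerge, ?_⟩
  rw [hwlen]
  by_contra hlt
  push_neg at hlt
  -- hlt : (Fintype.card Q).choose 2 < n
  have hdiag : ∀ i : ℕ, i < n → deltaStar δ p (w.take i) ≠ deltaStar δ q (w.take i) := by
    intro i hi hcontra
    exact Nat.find_min hex hi ⟨w.take i, by simp only [List.length_take, hwlen]; omega, hcontra⟩
  set f : Fin n → {z : Sym2 Q // ¬ z.IsDiag} := fun i =>
    ⟨s(deltaStar δ p (w.take i), deltaStar δ q (w.take i)), by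
      rw [Sym2.isDiag_iff_proj_eq]
      exact hdiag i i.isLt⟩ with hfdef
  have hcard : Fintype.card {z : Sym2 Q // ¬ z.IsDiag} < Fintype.card (Fin n) := by
    rw [Sym2.card_subtype_not_diag, Fintype.card_fin]
    exact hlt
  obtain ⟨i, j, hij, hfij⟩ := Fintype.exists_ne_map_eq_of_card_lt f hcard
  -- wlog i < j
  wlog hlt2 : (i : ℕ) < (j : ℕ) generalizing i j
  · exact this j i hij.symm hfij.symm (by omega)
  have hpair : s(deltaStar δ p (w.take i), deltaStar δ q (w.take i))
      = s(deltaStar δ p (w.take j), deltaStar δ q (w.take j)) := by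
    simpa [hfdef, Subtype.ext_iff] using hfij
  -- the shorter word
  set w' : List A := w.take i ++ w.drop j with hw'def
  have hjle : (j : ℕ) ≤ n := Nat.le_of_lt j.isLt
  have hlen' : w'.length = (i : ℕ) + (n - (j : ℕ)) := by
    simp [hw'def, hwlen, Nat.le_of_lt (lt_of_lt_of_le hlt2 hjle)]; omega
  have hlen'' : w'.length < n := by omega
  have hmerge' : deltaStar δ p w' = deltaStar δ q w' := by
    have hdropmerge : deltaStar δ (deltaStar δ p (w.take j)) (w.drop j)
        = deltaStar δ (deltaStar δ q (w.take j)) (w.drop j) := by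
      rw [← deltaStar_append, ← deltaStar_append, List.take_append_drop]
      exact hwmerge
    rw [hw'def, deltaStar_append, deltaStar_append]
    rw [Sym2.eq_iff] at hpair
    rcases hpair with ⟨h1, h2⟩ | ⟨h1, h2⟩
    · rw [h1, h2]; exact hdropmerge
    · rw [h1, h2]; exact hdropmerge.symm
  exact Nat.find_min hex hlen'' ⟨w', rfl, hmerge'⟩

theorem subset_merge_light {Q A : Type*} [Fintype Q] [DecidableEq Q] [Nonempty Q]
    (δ : Q → A → Q) (γ : A → ℕ) (k : ℕ) (hk : ∀ a : A, γ a ≤ k)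
    (hsync : ∃ (w : List A) (qbar : Q), ∀ p : Q, deltaStar δ p w = qbar)
    (P : Finset Q) (hP : P.Nonempty) :
    ∃ w : List A, (setImage δ P w).card = 1 ∧
      wordWeight γ w ≤ (P.card - 1) * k * (Fintype.card Q).choose 2 := by
  classical
  set C := (Fintype.card Q).choose 2 with hC
  have key : ∀ n : ℕ, ∀ P : Finset Q, P.card ≤ n → P.Nonempty →
      ∃ w : List A, (setImage δ P w).card = 1 ∧
        wordWeight γ w ≤ (P.card - 1) * k * C := by
    intro n
    induction n with
    | zero =>
      intro P hcard hne
      exact absurd (Finset.card_pos.mpr hne) (by omega)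
    | succ n ih =>
      intro P hcard hne
      by_cases h1 : P.card ≤ 1
      · have : P.card = 1 := le_antisymm h1 (Finset.card_pos.mpr hne)
        refine ⟨[], ?_, by simp [wordWeight]⟩
        simpa [setImage, deltaStar] using this
      · push_neg at h1
        obtain ⟨p, hp, q, hq, hpq⟩ := Finset.one_lt_card.mp h1
        obtain ⟨w, hwmerge, hwlen⟩ := pair_merge δ hsync p q
        set P' := setImage δ P w with hP'def
        have hP'ne : P'.Nonempty := hne.image _
        have hP'card : P'.card ≤ P.card - 1 := by
          have hsub : P' = (P.erase q).image (fun x => deltaStar δ x w) := by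
            apply Finset.Subset.antisymm
            · intro x hx
              simp only [hP'def, setImage, Finset.mem_image] at hx ⊢
              obtain ⟨y, hy, rfl⟩ := hx
              by_cases hyq : y = q
              · exact ⟨p, Finset.mem_erase.mpr ⟨hpq, hp⟩, by rw [hyq, ← hwmerge]⟩
              · exact ⟨y, Finset.mem_erase.mpr ⟨hyq, hy⟩, rfl⟩
            · intro x hx
              simp only [hP'def, setImage, Finset.mem_image] at hx ⊢
              obtain ⟨y, hy, rfl⟩ := hx
              exact ⟨y, Finset.mem_of_mem_erase hy, rfl⟩
          rw [hsub]
          calc ((P.erase q).image _).card ≤ (P.erase q).card := Finset.card_image_le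
            _ = P.card - 1 := Finset.card_erase_of_mem hq
        obtain ⟨w', hw'card, hw'weight⟩ := ih P' (by omega) hP'ne
        refine ⟨w ++ w', ?_, ?_⟩
        · rw [setImage_append]; exact hw'card
        · have h1' : wordWeight γ w ≤ k * C :=
            le_trans (wordWeight_le γ k hk w) (Nat.mul_le_mul_left k hwlen)
          have hP'pos : 1 ≤ P'.card := Finset.card_pos.mpr hP'ne
          calc wordWeight γ (w ++ w') = wordWeight γ w + wordWeight γ w' :=
                wordWeight_append γ w w'
            _ ≤ k * C + (P'.card - 1) * k * C := add_le_add h1' hw'weight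
            _ = ((P'.card - 1) + 1) * k * C := by ring
            _ ≤ (P.card - 1) * k * C := by
                apply Nat.mul_le_mul_right
                apply Nat.mul_le_mul_right
                omega
  exact key P.card P le_rfl hP
end

section
/- Consider the WFA A from the previous context (4 states, letters a, b, c with weights 1, 1, 6). Every synchronizing word for A with minimal weight has weight at least 9; in particular no synchronizing word of weight less than 9 exists. -/
/-- Transition function of the example automaton: letters 0 = a, 1 = b, 2 = c. -/
def exDelta : Fin 4 → Fin 3 → Fin 4
  | 0, 0 => 1 | 1, 0 => 2 | 2, 0 => 3 | 3, 0 => 0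
  | 0, 1 => 0 | 1, 1 => 1 | 2, 1 => 2 | 3, 1 => 0
  | 0, 2 => 0 | 1, 2 => 1 | 2, 2 => 0 | 3, 2 => 3

/-- Weights: γ(a) = 1, γ(b) = 1, γ(c) = 6. -/
def exGamma : Fin 3 → ℕ
  | 0 => 1 | 1 => 1 | 2 => 6

/-- Minimal synchronizing weight from a subset of states (potential function). -/
def mu (P : Finset (Fin 4)) : ℕ :=
  match decide (0 ∈ P), decide (1 ∈ P), decide (2 ∈ P), decide (3 ∈ P) with
  | true,  true,  true,  true  => 9
  | true,  true,  true,  false => 8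
  | true,  true,  false, true  => 5
  | true,  false, true,  true  => 6
  | false, true,  true,  true  => 7
  | true,  true,  false, false => 4
  | true,  false, true,  false => 6
  | true,  false, false, true  => 1
  | false, true,  true,  false => 3
  | false, true,  false, true  => 5
  | false, false, true,  true  => 2
  | _,     _,     _,     _     => 0

lemma mu_step : ∀ (P : Finset (Fin 4)) (x : Fin 3),
    mu P ≤ exGamma x + mu (P.image (fun q => exDelta q x)) := by decide

lemma mu_small : ∀ P : Finset (Fin 4), P.card ≤ 1 → mu P = 0 := by decide

lemma mu_univ : mu (Finset.univ : Finset (Fin 4)) = 9 := by decide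

lemma key : ∀ (w : List (Fin 3)) (P : Finset (Fin 4)),
    (setImage exDelta P w).card ≤ 1 → mu P ≤ wordWeight exGamma w := by
  intro w
  induction w with
  | nil =>
    intro P hP
    simp only [setImage, deltaStar, List.foldl_nil, Finset.image_id'] at hP
    simp [wordWeight, mu_small P hP]
  | cons x xs ih =>
    intro P hP
    have him : setImage exDelta P (x :: xs) =
        setImage exDelta (P.image (fun q => exDelta q x)) xs := by
      simp [setImage, deltaStar, Finset.image_image, Function.comp_def]
    rw [him] at hP
    have h1 := mu_step P x
    have h2 := ih (P.image (fun q => exDelta q x)) hP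
    simp only [wordWeight, List.map_cons, List.sum_cons] at *
    omega

theorem example_min_weight_ge_nine :
    ∀ w : List (Fin 3),
      (∃ qbar : Fin 4, ∀ q : Fin 4, deltaStar exDelta q w = qbar) →
        9 ≤ wordWeight exGamma w := by
  intro w ⟨qbar, hq⟩
  have hcard : (setImage exDelta (Finset.univ : Finset (Fin 4)) w).card ≤ 1 := by
    have hsub : setImage exDelta Finset.univ w ⊆ {qbar} := by
      intro q hqmem
      simp only [setImage, Finset.mem_image] at hqmem
      obtain ⟨r, -, hr⟩ := hqmem
      simp [hq r ▸ hr.symm]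
    calc (setImage exDelta Finset.univ w).card ≤ ({qbar} : Finset (Fin 4)).card :=
          Finset.card_le_card hsub
      _ = 1 := Finset.card_singleton qbar
  have := key w Finset.univ hcard
  rw [mu_univ] at this
  exact this
end

section
/- Let A = (Q, Σ, δ, γ) be a WFA with |Q| = n and all letter weights at most k. Suppose P₁, ..., P_{n-1} are subsets of Q and w₁, ..., w_{n-1} are words such that P_i ⊆ T_i where T₁ = Q, T_{i+1} = δ(T_i, w_i), |δ(P_i, w_i)| = 1 whenever |P_i| > 1, and γ(w_i) ≤ (|P_i| - 1) · k · C(n, 2). If |T_n| = 1, then γ(w₁···w_{n-1}) ≤ k · (n - 1) · C(n, 2). -/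
lemma key_card {Q : Type*} [DecidableEq Q] (f : Q → Q) (P T : Finset Q)
    (hPT : P ⊆ T) (h1 : (P.image f).card = 1) :
    (T.image f).card + (P.card - 1) ≤ T.card := by
  have hPne : P.Nonempty := by
    by_contra h
    rw [Finset.not_nonempty_iff_eq_empty] at h
    simp [h] at h1
  have hPcard : 1 ≤ P.card := Finset.card_pos.mpr hPne
  have hsub2 : T.image f ⊆ (T \ P).image f ∪ P.image f := by
    intro x hx
    obtain ⟨q, hq, rfl⟩ := Finset.mem_image.mp hx
    by_cases hqP : q ∈ P
    · exact Finset.mem_union_right _ (Finset.mem_image_of_mem f hqP)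
    · exact Finset.mem_union_left _ (Finset.mem_image_of_mem f (Finset.mem_sdiff.mpr ⟨hq, hqP⟩))
  have h2 : (T.image f).card ≤ (T \ P).card + 1 :=
    calc (T.image f).card ≤ ((T \ P).image f ∪ P.image f).card := Finset.card_le_card hsub2
      _ ≤ ((T \ P).image f).card + (P.image f).card := Finset.card_union_le _ _
      _ ≤ (T \ P).card + 1 := by rw [h1]; exact Nat.add_le_add_right (Finset.card_image_le) 1
  have h3 : (T \ P).card = T.card - P.card := Finset.card_sdiff_of_subset hPT
  have h4 : P.card ≤ T.card := Finset.card_le_card hPT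
  omega

lemma sum_range_list {M : Type*} [AddCommMonoid M] (f : ℕ → M) (m : ℕ) :
    ((List.range m).map f).sum = ∑ i ∈ Finset.range m, f i := by
  induction m with
  | zero => simp
  | succ m ih => rw [List.range_succ, Finset.sum_range_succ]; simp [ih]

lemma wordWeight_flatten {A : Type*} (γ : A → ℕ) (l : List (List A)) :
    wordWeight γ l.flatten = (l.map (wordWeight γ)).sum := by
  induction l with
  | nil => simp [wordWeight]
  | cons a l ih => simp [wordWeight, List.map_append] at *; omega

theorem greedy_weight_bound {Q A : Type*} [Fintype Q] [DecidableEq Q]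
    (δ : Q → A → Q) (γ : A → ℕ) (k n : ℕ) (hn : n = Fintype.card Q)
    (hk : ∀ a : A, γ a ≤ k)
    (P : ℕ → Finset Q) (T : ℕ → Finset Q) (w : ℕ → List A)
    (hT1 : T 1 = Finset.univ)
    (hstep : ∀ i, 1 ≤ i → i ≤ n - 1 → T (i + 1) = setImage δ (T i) (w i))
    (hsub : ∀ i, 1 ≤ i → i ≤ n - 1 → P i ⊆ T i)
    (hmerge : ∀ i, 1 ≤ i → i ≤ n - 1 → 1 < (P i).card →
      (setImage δ (P i) (w i)).card = 1)
    (hwt : ∀ i, 1 ≤ i → i ≤ n - 1 →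
      wordWeight γ (w i) ≤ ((P i).card - 1) * k * n.choose 2)
    (hTn : (T n).card = 1) :
    wordWeight γ (((List.range (n - 1)).map (fun i => w (i + 1))).flatten) ≤
      k * (n - 1) * n.choose 2 := by
  rcases Nat.eq_zero_or_pos n with hn0 | hn1
  · subst hn0; simp [wordWeight]
  -- step bound: per step drop
  have step : ∀ i, 1 ≤ i → i ≤ n - 1 →
      (T (i+1)).card + ((P i).card - 1) ≤ (T i).card := by
    intro i h1 h2
    rw [hstep i h1 h2]
    by_cases hP : 1 < (P i).card
    · exact key_card _ _ _ (hsub i h1 h2) (hmerge i h1 h2 hP)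
    · have : (P i).card - 1 = 0 := by omega
      rw [this, add_zero]
      exact Finset.card_image_le
  -- telescoping
  have tele : ∀ j, j ≤ n - 1 →
      (∑ i ∈ Finset.range j, ((P (i+1)).card - 1)) + (T (j+1)).card ≤ (T 1).card := by
    intro j
    induction j with
    | zero => simp
    | succ j ih =>
      intro hj
      have hj' : j ≤ n - 1 := by omega
      have := ih hj'
      have hs := step (j+1) (by omega) hj
      rw [Finset.sum_range_succ]
      omega
  have hT1card : (T 1).card = n := by rw [hT1, Finset.card_univ, hn]
  have hTnn : (T (n-1+1)).card = 1 := by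
    have : n - 1 + 1 = n := by omega
    rw [this, hTn]
  have sumbound : (∑ i ∈ Finset.range (n-1), ((P (i+1)).card - 1)) ≤ n - 1 := by
    have := tele (n-1) le_rfl
    omega
  rw [wordWeight_flatten, List.map_map]
  have := sum_range_list (fun i => wordWeight γ (w (i+1))) (n-1)
  rw [show (wordWeight γ ∘ fun i => w (i + 1)) = (fun i => wordWeight γ (w (i+1))) from rfl, this]
  calc (∑ i ∈ Finset.range (n-1), wordWeight γ (w (i+1)))
      ≤ ∑ i ∈ Finset.range (n-1), ((P (i+1)).card - 1) * k * n.choose 2 := by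
        apply Finset.sum_le_sum
        intro i hi
        exact hwt (i+1) (by omega) (by
          simp only [Finset.mem_range] at hi; omega)
    _ = (∑ i ∈ Finset.range (n-1), ((P (i+1)).card - 1)) * k * n.choose 2 := by
        rw [Finset.sum_mul, Finset.sum_mul]
    _ ≤ (n-1) * k * n.choose 2 := by
        exact Nat.mul_le_mul_right _ (Nat.mul_le_mul_right _ sumbound)
    _ = k * (n-1) * n.choose 2 := by ring
end
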